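/- For H = S(SᵀAAᵀS)†Sᵀ with S ∈ ℝ^{m×q} and A ∈ ℝ^{m×n}, the matrix AᵀHA is idempotent: (AᵀHA)² = AᵀHA; consequently I − AᵀHA is an orthogonal projector. -/
import Mathlib


open Matrix

/-- `P` is the Moore–Penrose pseudoinverse of `M` (Penrose conditions). -/
def IsMoorePenrose {q : ℕ} (M P : Matrix (Fin q) (Fin q) ℝ) : Prop :=
  M * P * M = M ∧ P * M * P = P ∧ (M * P)ᵀ = M * P ∧ (P * M)ᵀ = P * M

private lemma mp_unique {q : ℕ} {M P Q : Matrix (Fin q) (Fin q) ℝ}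
    (hP : IsMoorePenrose M P) (hQ : IsMoorePenrose M Q) : P = Q := by
  obtain ⟨hP1, hP2, hP3, hP4⟩ := hP
  obtain ⟨hQ1, hQ2, hQ3, hQ4⟩ := hQ
  have hMPQ : M * P = M * Q := by
    calc M * P = (M * P)ᵀ := hP3.symm
    _ = ((M * Q * M) * P)ᵀ := by rw [hQ1]
    _ = ((M * Q) * (M * P))ᵀ := by rw [Matrix.mul_assoc (M * Q) M P]
    _ = (M * P)ᵀ * (M * Q)ᵀ := transpose_mul _ _
    _ = (M * P) * (M * Q) := by rw [hP3, hQ3]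
    _ = (M * P * M) * Q := by rw [Matrix.mul_assoc (M * P) M Q]
    _ = M * Q := by rw [hP1]
  have hPQM : P * M = Q * M := by
    calc P * M = (P * M)ᵀ := hP4.symm
    _ = ((P * M) * (Q * M))ᵀ := by
        rw [show (P * M) * (Q * M) = P * (M * Q * M) by
          rw [Matrix.mul_assoc P M (Q * M), Matrix.mul_assoc M Q M], hQ1]
    _ = (Q * M)ᵀ * (P * M)ᵀ := transpose_mul _ _
    _ = (Q * M) * (P * M) := by rw [hP4, hQ4]
    _ = Q * (M * P * M) := by
        rw [Matrix.mul_assoc Q M (P * M), Matrix.mul_assoc M P M]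
    _ = Q * M := by rw [hP1]
  calc P = P * M * P := hP2.symm
  _ = Q * M * P := by rw [hPQM]
  _ = Q * (M * P) := Matrix.mul_assoc _ _ _
  _ = Q * (M * Q) := by rw [hMPQ]
  _ = Q * M * Q := (Matrix.mul_assoc _ _ _).symm
  _ = Q := hQ2

private lemma mp_transpose {q : ℕ} {M P : Matrix (Fin q) (Fin q) ℝ}
    (hM : Mᵀ = M) (hP : IsMoorePenrose M P) : IsMoorePenrose M Pᵀ := by
  obtain ⟨hP1, hP2, hP3, hP4⟩ := hP
  refine ⟨?_, ?_, ?_, ?_⟩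
  · calc M * Pᵀ * M = (Mᵀ * P * Mᵀ)ᵀ := by simp only [transpose_mul, transpose_transpose, Matrix.mul_assoc]
    _ = M := by rw [hM, hP1, hM]
  · calc Pᵀ * M * Pᵀ = (P * Mᵀ * P)ᵀ := by simp only [transpose_mul, transpose_transpose, Matrix.mul_assoc]
    _ = Pᵀ := by rw [hM, hP2]
  · calc (M * Pᵀ)ᵀ = P * Mᵀ := by simp only [transpose_mul, transpose_transpose]
    _ = P * M := by rw [hM]
    _ = (P * M)ᵀ := hP4.symm
    _ = Mᵀ * Pᵀ := transpose_mul _ _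
    _ = M * Pᵀ := by rw [hM]
  · calc (Pᵀ * M)ᵀ = Mᵀ * P := by simp only [transpose_mul, transpose_transpose]
    _ = M * P := by rw [hM]
    _ = (M * P)ᵀ := hP3.symm
    _ = Pᵀ * Mᵀ := transpose_mul _ _
    _ = Pᵀ * M := by rw [hM]

theorem stmt_9 (m n q : ℕ) (S : Matrix (Fin m) (Fin q) ℝ) (A : Matrix (Fin m) (Fin n) ℝ)
    (P : Matrix (Fin q) (Fin q) ℝ) (hP : IsMoorePenrose (Sᵀ * A * Aᵀ * S) P) :
    let H : Matrix (Fin m) (Fin m) ℝ := S * P * Sᵀ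
    let M : Matrix (Fin n) (Fin n) ℝ := Aᵀ * H * A
    M * M = M ∧ (1 - M) * (1 - M) = 1 - M ∧ (1 - M)ᵀ = 1 - M := by
  intro H M
  have hNsymm : (Sᵀ * A * Aᵀ * S)ᵀ = Sᵀ * A * Aᵀ * S := by
    simp only [transpose_mul, transpose_transpose, Matrix.mul_assoc]
  have hPsymm : Pᵀ = P := mp_unique (mp_transpose hNsymm hP) hP
  have hidem : M * M = M := by
    show (Aᵀ * (S * P * Sᵀ) * A) * (Aᵀ * (S * P * Sᵀ) * A) = Aᵀ * (S * P * Sᵀ) * A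
    calc (Aᵀ * (S * P * Sᵀ) * A) * (Aᵀ * (S * P * Sᵀ) * A)
        = Aᵀ * S * (P * (Sᵀ * A * Aᵀ * S) * P) * (Sᵀ * A) := by
          simp only [Matrix.mul_assoc]
    _ = Aᵀ * S * P * (Sᵀ * A) := by rw [hP.2.1]
    _ = Aᵀ * (S * P * Sᵀ) * A := by simp only [Matrix.mul_assoc]
  have hsymm : Mᵀ = M := by
    show (Aᵀ * (S * P * Sᵀ) * A)ᵀ = Aᵀ * (S * P * Sᵀ) * A
    simp only [transpose_mul, transpose_transpose, hPsymm, Matrix.mul_assoc]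
  refine ⟨hidem, ?_, ?_⟩
  · rw [sub_mul, mul_sub, mul_sub, one_mul, mul_one, hidem, sub_self, sub_zero, one_mul]
  · rw [transpose_sub, transpose_one, hsymm]
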